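/- Let g, gₙ : ℝ → ℝ be bounded functions and ξ ∈ C¹(ℝ) with 0 ≤ ξ ≤ 1. Define g_ε := ξ gₙ + (1−ξ) g. If a gₙ' + H(x,gₙ) > μ − ε and a g' + H(x,g) > μ − ε on an interval I, a is bounded, ξ' is bounded, and H(x,·) is C_R-Lipschitz on the relevant range, then a g_ε' + H(x, g_ε) > μ − ε − (C_R + ‖a‖_∞‖ξ'‖_∞)·‖g − gₙ‖_{L^∞(I)} on I. -/

import Mathlib

private lemma cutoff_aux (Hx : ℝ → ℝ) (mu ε CR Ca Cξ δ R s p q u v e ax : ℝ)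
    (hCR : 0 ≤ CR) (hs0 : 0 ≤ s) (hs1 : s ≤ 1) (hδx : |q - p| ≤ δ)
    (ha : |ax| ≤ Ca) (he : |e| ≤ Cξ) (hp : |p| ≤ R) (hq : |q| ≤ R)
    (hlip : ∀ y z, |y| ≤ R → |z| ≤ R → |Hx y - Hx z| ≤ CR * |y - z|)
    (h1 : ax * u + Hx p > mu - ε) (h2 : ax * v + Hx q > mu - ε) :
    ax * (e * p + s * u + (-e * q + (1 - s) * v)) + Hx (s * p + (1 - s) * q)
      > mu - ε - (CR + Ca * Cξ) * δ := by
  have hδ0 : (0:ℝ) ≤ δ := le_trans (abs_nonneg _) hδx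
  have hCa : (0:ℝ) ≤ Ca := le_trans (abs_nonneg _) ha
  have hCξ : (0:ℝ) ≤ Cξ := le_trans (abs_nonneg _) he
  have hs1' : (0:ℝ) ≤ 1 - s := by linarith
  -- range bound for the interpolant
  have hwR : |s * p + (1 - s) * q| ≤ R := by
    have h1 : |s * p| = s * |p| := by rw [abs_mul, abs_of_nonneg hs0]
    have h2 : |(1 - s) * q| = (1 - s) * |q| := by rw [abs_mul, abs_of_nonneg hs1']
    calc |s * p + (1 - s) * q| ≤ |s * p| + |(1 - s) * q| := abs_add_le _ _
      _ = s * |p| + (1 - s) * |q| := by rw [h1, h2]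
      _ ≤ s * R + (1 - s) * R := by
          have := mul_le_mul_of_nonneg_left hp hs0
          have := mul_le_mul_of_nonneg_left hq hs1'
          linarith
      _ = R := by ring
  -- Lipschitz estimates
  have hL1 := hlip (s * p + (1 - s) * q) p hwR hp
  have hL2 := hlip (s * p + (1 - s) * q) q hwR hq
  have e1 : |s * p + (1 - s) * q - p| = (1 - s) * |q - p| := by
    rw [show s * p + (1 - s) * q - p = (1 - s) * (q - p) by ring, abs_mul,
      abs_of_nonneg hs1']
  have e2 : |s * p + (1 - s) * q - q| = s * |q - p| := by
    rw [show s * p + (1 - s) * q - q = s * (p - q) by ring, abs_mul,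
      abs_of_nonneg hs0, abs_sub_comm]
  rw [e1] at hL1
  rw [e2] at hL2
  have hL1' : Hx p - CR * ((1 - s) * |q - p|) ≤ Hx (s * p + (1 - s) * q) := by
    have := abs_sub_le_iff.1 hL1
    linarith [this.2]
  have hL2' : Hx q - CR * (s * |q - p|) ≤ Hx (s * p + (1 - s) * q) := by
    have := abs_sub_le_iff.1 hL2
    linarith [this.2]
  -- combine the Lipschitz estimates by convexity
  have hHw : Hx (s * p + (1 - s) * q) ≥ s * Hx p + (1 - s) * Hx q - CR * δ := by
    have h1' := mul_le_mul_of_nonneg_left hL1' hs0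
    have h2' := mul_le_mul_of_nonneg_left hL2' hs1'
    have hprod : CR * (2 * s * (1 - s) * |q - p|) ≤ CR * δ := by
      apply mul_le_mul_of_nonneg_left _ hCR
      nlinarith [abs_nonneg (q - p), sq_nonneg (2 * s - 1)]
    nlinarith
  -- strict convex combination of the two supersolution inequalities
  have hcomb : s * (ax * u + Hx p) + (1 - s) * (ax * v + Hx q) > mu - ε := by
    rcases eq_or_lt_of_le hs0 with h | h
    · rw [← h]; ring_nf; linarith
    · nlinarith [mul_le_mul_of_nonneg_left h2.le hs1',
        mul_lt_mul_of_pos_left h1 h]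
  -- bound the cross term
  have hcross : |ax * e * (p - q)| ≤ Ca * Cξ * δ := by
    have hpq : |p - q| ≤ δ := by rwa [abs_sub_comm]
    rw [abs_mul, abs_mul]
    have t1 : |ax| * |e| ≤ Ca * Cξ :=
      mul_le_mul ha he (abs_nonneg _) hCa
    exact mul_le_mul t1 hpq (abs_nonneg _) (by positivity)
  have hcross' := (abs_le.1 hcross).1
  nlinarith [hHw, hcomb, hcross']

/-- Interpolation of two strict supersolutions of `a f' + H(x,f) = μ - ε` by a
`C¹` cutoff `ξ` with `0 ≤ ξ ≤ 1`: the function `g_ε := ξ gₙ + (1-ξ) g` satisfies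
`a g_ε' + H(x,g_ε) > μ - ε - (C_R + ‖a‖_∞ ‖ξ'‖_∞) ‖g - gₙ‖_{L^∞(I)}` on `I`. -/
theorem cutoff_interpolation_supersolution
    (a : ℝ → ℝ) (H : ℝ → ℝ → ℝ) (g gn ξ : ℝ → ℝ)
    (mu ε R CR Ca Cξ δ A B : ℝ) (hAB : A < B)
    (ha_bdd : ∀ x, |a x| ≤ Ca)
    (hξ : ContDiff ℝ 1 ξ) (hξ01 : ∀ x, 0 ≤ ξ x ∧ ξ x ≤ 1)
    (hξ' : ∀ x, |deriv ξ x| ≤ Cξ)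
    (hgR : ∀ x, |g x| ≤ R) (hgnR : ∀ x, |gn x| ≤ R)
    (hCR : 0 ≤ CR)
    (hH_lip : ∀ x p q, |p| ≤ R → |q| ≤ R → |H x p - H x q| ≤ CR * |p - q|)
    (hg_diff : ∀ x ∈ Set.Ioo A B, DifferentiableAt ℝ g x)
    (hgn_diff : ∀ x ∈ Set.Ioo A B, DifferentiableAt ℝ gn x)
    (hδ : ∀ x ∈ Set.Ioo A B, |g x - gn x| ≤ δ)
    (hg_sup : ∀ x ∈ Set.Ioo A B, a x * deriv g x + H x (g x) > mu - ε)
    (hgn_sup : ∀ x ∈ Set.Ioo A B, a x * deriv gn x + H x (gn x) > mu - ε) :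
    ∀ x ∈ Set.Ioo A B,
      a x * deriv (fun y => ξ y * gn y + (1 - ξ y) * g y) x
        + H x (ξ x * gn x + (1 - ξ x) * g x)
        > mu - ε - (CR + Ca * Cξ) * δ := by
  intro x hx
  have hξd : DifferentiableAt ℝ ξ x := (hξ.differentiable one_ne_zero).differentiableAt
  have hgd := hg_diff x hx
  have hgnd := hgn_diff x hx
  have hd : deriv (fun y => ξ y * gn y + (1 - ξ y) * g y) x
      = deriv ξ x * gn x + ξ x * deriv gn x
        + (-(deriv ξ x) * g x + (1 - ξ x) * deriv g x) := by
    have h1 : DifferentiableAt ℝ (fun y => ξ y * gn y) x := hξd.mul hgnd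
    have h1' : DifferentiableAt ℝ (fun y => (1 : ℝ) - ξ y) x :=
      (differentiableAt_const 1).sub hξd
    have h2 : DifferentiableAt ℝ (fun y => (1 - ξ y) * g y) x := h1'.mul hgd
    rw [deriv_fun_add h1 h2, deriv_fun_mul hξd hgnd, deriv_fun_mul h1' hgd, deriv_const_sub]
  rw [hd]
  exact cutoff_aux (H x) mu ε CR Ca Cξ δ R (ξ x) (gn x) (g x)
    (deriv gn x) (deriv g x) (deriv ξ x) (a x)
    hCR (hξ01 x).1 (hξ01 x).2 (hδ x hx) (ha_bdd x) (hξ' x) (hgnR x) (hgR x)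
    (hH_lip x) (hgn_sup x hx) (hg_sup x hx)
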